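/- Let ρ : ℤ → ℝ be a bounded function with ρ_k ≥ 0 for all k ∈ ℤ. Define the bounded linear operator M on the Hilbert space ℓ²(ℤ, ℂ) by (Mω)_k = ρ_{k+1} ω_{k+1} − ρ_{k−1} ω_{k−1}. Then every element λ of the spectrum of M is purely imaginary, i.e., Re λ = 0. -/

import Mathlib

noncomputable section

open scoped ComplexConjugate ENNReal NNReal

namespace SPIaux

local notation "H" => lp (fun _ : ℤ => ℂ) 2

lemma memℓp_wshift (g : ℤ → ℂ) (c : ℝ) (hg : ∀ k, ‖g k‖ ≤ c) (e : ℤ ≃ ℤ) (ω : H) :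
    Memℓp (fun k => g k * ω (e k)) 2 := by
  apply memℓp_gen
  have h1 : Summable (fun k : ℤ => ‖(ω : ∀ _ : ℤ, ℂ) k‖ ^ (2 : ℝ≥0∞).toReal) :=
    (lp.memℓp ω).summable (by norm_num)
  have h2 : Summable (fun k : ℤ => ‖(ω : ∀ _ : ℤ, ℂ) (e k)‖ ^ (2 : ℝ≥0∞).toReal) :=
    e.summable_iff.mpr h1
  refine Summable.of_nonneg_of_le (fun k => ?_) (fun k => ?_) (h2.mul_left (c ^ (2 : ℝ≥0∞).toReal))
  · positivity
  · have hc : (0:ℝ) ≤ c := le_trans (norm_nonneg _) (hg 0)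
    rw [← Real.mul_rpow hc (norm_nonneg _)]
    have : ‖g k * (ω : ∀ _ : ℤ, ℂ) (e k)‖ ≤ c * ‖(ω : ∀ _ : ℤ, ℂ) (e k)‖ := by
      rw [norm_mul]; exact mul_le_mul_of_nonneg_right (hg k) (norm_nonneg _)
    exact Real.rpow_le_rpow (norm_nonneg _) this (by norm_num)

/-- weighted shift operator: `(T ω) k = g k * ω (e k)` -/
def wshift (g : ℤ → ℂ) (c : ℝ) (hg : ∀ k, ‖g k‖ ≤ c) (e : ℤ ≃ ℤ) : H →L[ℂ] H :=
  LinearMap.mkContinuous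
    { toFun := fun ω => ⟨fun k => g k * ω (e k), memℓp_wshift g c hg e ω⟩
      map_add' := fun ω η => by
        apply lp.ext; funext k
        simp [lp.coeFn_add, mul_add]; rfl
      map_smul' := fun a ω => by
        apply lp.ext; funext k
        simp [lp.coeFn_smul]
        ring }
    c
    (by
      intro ω
      have hc : (0:ℝ) ≤ c := le_trans (norm_nonneg _) (hg 0)
      apply lp.norm_le_of_forall_sum_le (p := 2) (by norm_num)
        (mul_nonneg hc (norm_nonneg _))
      intro s
      have h1 : ∀ i ∈ s, ‖g i * ω (e i)‖ ^ (2:ℝ≥0∞).toReal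
          ≤ c ^ (2:ℝ≥0∞).toReal * ‖(ω : ∀ _ : ℤ, ℂ) (e i)‖ ^ (2:ℝ≥0∞).toReal := by
        intro i _
        rw [← Real.mul_rpow hc (norm_nonneg _)]
        refine Real.rpow_le_rpow (norm_nonneg _) ?_ (by norm_num)
        rw [norm_mul]; exact mul_le_mul_of_nonneg_right (hg i) (norm_nonneg _)
      calc ∑ i ∈ s, ‖g i * ω (e i)‖ ^ (2:ℝ≥0∞).toReal
          ≤ ∑ i ∈ s, c ^ (2:ℝ≥0∞).toReal * ‖(ω : ∀ _ : ℤ, ℂ) (e i)‖ ^ (2:ℝ≥0∞).toReal :=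
            Finset.sum_le_sum h1
        _ = c ^ (2:ℝ≥0∞).toReal * ∑ i ∈ s, ‖(ω : ∀ _ : ℤ, ℂ) (e i)‖ ^ (2:ℝ≥0∞).toReal := by
            rw [Finset.mul_sum]
        _ = c ^ (2:ℝ≥0∞).toReal *
              ∑ j ∈ s.map e.toEmbedding, ‖(ω : ∀ _ : ℤ, ℂ) j‖ ^ (2:ℝ≥0∞).toReal := by
            rw [Finset.sum_map]; rfl
        _ ≤ c ^ (2:ℝ≥0∞).toReal * ‖ω‖ ^ (2:ℝ≥0∞).toReal := by
            refine mul_le_mul_of_nonneg_left ?_ (by positivity)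
            exact lp.sum_rpow_le_norm_rpow (by norm_num) ω _
        _ = (c * ‖ω‖) ^ (2:ℝ≥0∞).toReal := (Real.mul_rpow hc (norm_nonneg _)).symm)

@[simp] lemma wshift_apply (g : ℤ → ℂ) (c : ℝ) (hg : ∀ k, ‖g k‖ ≤ c) (e : ℤ ≃ ℤ) (ω : H) (k : ℤ) :
    (wshift g c hg e ω) k = g k * ω (e k) := rfl

end SPIaux
theorem spectrum_purely_imaginary_of_nonneg_coeffs
    (ρ : ℤ → ℝ) (hbd : ∃ C : ℝ, ∀ k : ℤ, |ρ k| ≤ C) (hpos : ∀ k : ℤ, 0 ≤ ρ k)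
    (M : lp (fun _ : ℤ => ℂ) 2 →L[ℂ] lp (fun _ : ℤ => ℂ) 2)
    (hM : ∀ (ω : lp (fun _ : ℤ => ℂ) 2) (k : ℤ),
      (M ω) k = (ρ (k + 1) : ℂ) * ω (k + 1) - (ρ (k - 1) : ℂ) * ω (k - 1)) :
    ∀ z ∈ spectrum ℂ M, z.re = 0 := by
  classical
  obtain ⟨C, hC⟩ := hbd
  set g : ℤ → ℂ := fun k => ((Real.sqrt (ρ k) : ℝ) : ℂ) with hg_def
  have hgbd : ∀ k, ‖g k‖ ≤ Real.sqrt C := by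
    intro k
    simp only [hg_def, Complex.norm_real, Real.norm_eq_abs,
      abs_of_nonneg (Real.sqrt_nonneg _)]
    exact Real.sqrt_le_sqrt ((le_abs_self _).trans (hC k))
  have h1bd : ∀ k : ℤ, ‖(1 : ℂ)‖ ≤ (1 : ℝ) := fun k => by simp
  set Y := SPIaux.wshift g (Real.sqrt C) hgbd (Equiv.refl ℤ) with hY_def
  set S := SPIaux.wshift (fun _ => (1:ℂ)) 1 h1bd (Equiv.addRight (1:ℤ)) with hS_def
  set S' := SPIaux.wshift (fun _ => (1:ℂ)) 1 h1bd (Equiv.subRight (1:ℤ)) with hS'_def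
  set A := S - S' with hA_def
  set X := A * Y with hX_def
  set N := Y * X with hN_def
  -- M = X * Y
  have hXY : X * Y = M := by
    ext ω k
    have hgg : ∀ j : ℤ, g j * g j = (ρ j : ℂ) := by
      intro j
      rw [hg_def, ← Complex.ofReal_mul, Real.mul_self_sqrt (hpos j)]
    simp only [hX_def, hA_def, hY_def, hS_def, hS'_def, ContinuousLinearMap.mul_apply,
      ContinuousLinearMap.sub_apply, lp.coeFn_sub, Pi.sub_apply,
      SPIaux.wshift_apply, Equiv.coe_addRight, Equiv.subRight_apply, Equiv.refl_apply,
      one_mul, hM]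
    rw [← mul_assoc, ← mul_assoc, hgg, hgg]
  -- adjoint of S is S'
  have hSadj : S' = ContinuousLinearMap.adjoint S := by
    rw [ContinuousLinearMap.eq_adjoint_iff]
    intro x y
    rw [lp.inner_eq_tsum, lp.inner_eq_tsum]
    have key := (Equiv.subRight (1:ℤ)).tsum_eq
      (fun k => (starRingEnd ℂ) (x k) * y (k + 1))
    calc ∑' k, (inner ℂ ((S' x) k) (y k) : ℂ)
        = ∑' k, (starRingEnd ℂ) (x (k - 1)) * y k := by
          refine tsum_congr fun k => ?_
          simp [hS'_def, RCLike.inner_apply, Equiv.subRight_apply, mul_comm]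
      _ = ∑' k, (starRingEnd ℂ) (x k) * y (k + 1) := by
          rw [← key]
          refine tsum_congr fun k => ?_
          simp [Equiv.subRight_apply, sub_add_cancel]
      _ = ∑' k, (inner ℂ (x k) ((S y) k) : ℂ) := by
          refine tsum_congr fun k => ?_
          simp [hS_def, RCLike.inner_apply, Equiv.coe_addRight, mul_comm]
  have hAadj : ContinuousLinearMap.adjoint A = -A := by
    rw [hA_def, map_sub, ← hSadj, hSadj, ContinuousLinearMap.adjoint_adjoint]
    abel
  -- Y is self-adjoint
  have hYadj : ContinuousLinearMap.adjoint Y = Y := by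
    symm
    rw [ContinuousLinearMap.eq_adjoint_iff]
    intro x y
    rw [lp.inner_eq_tsum, lp.inner_eq_tsum]
    refine tsum_congr fun k => ?_
    simp only [hY_def, RCLike.inner_apply, SPIaux.wshift_apply, Equiv.refl_apply, map_mul,
      hg_def, Complex.conj_ofReal]
    ring
  -- N is skew-adjoint
  have hsY : star Y = Y := by rw [ContinuousLinearMap.star_eq_adjoint, hYadj]
  have hsA : star A = -A := by rw [ContinuousLinearMap.star_eq_adjoint, hAadj]
  have hstarN : star N = -N := by
    rw [hN_def, hX_def, star_mul, star_mul, hsY, hsA]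
    simp [mul_assoc, mul_neg, neg_mul]
  have hsa : IsSelfAdjoint (Complex.I • N) := by
    rw [IsSelfAdjoint, star_smul, hstarN, Complex.star_def, Complex.conj_I, neg_smul,
      smul_neg, neg_neg]
  intro z hz
  by_cases hz0 : z = 0
  · simp [hz0]
  · have h1 : z ∈ spectrum ℂ (X * Y) := by rw [hXY]; exact hz
    have h2 : z ∈ spectrum ℂ N := by
      have hswap := spectrum.nonzero_mul_comm (𝕜 := ℂ) X Y
      have hm : z ∈ spectrum ℂ (X * Y) \ {0} := ⟨h1, hz0⟩
      rw [hswap] at hm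
      exact hm.1
    have h4 : Complex.I * z ∈ spectrum ℂ (Complex.I • N) := by
      rw [show (Complex.I • N) = (Units.mk0 Complex.I Complex.I_ne_zero) • N from rfl,
        spectrum.unit_smul_eq_smul]
      exact ⟨z, h2, rfl⟩
    have h5 := hsa.im_eq_zero_of_mem_spectrum h4
    simpa using h5
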